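/- Let X be a Riesz space and let f, g : X → ℝ be Riesz homomorphisms. Then |f - g| (the modulus of f - g in the order dual of X) equals f + g - 2(f ∧ g), and f ∧ g is a Riesz homomorphism. In particular, the positive and negative parts of a difference of Riesz homomorphisms are Riesz homomorphisms. -/

import Mathlib

set_option linter.unusedSectionVars false

section Aux
variable {X : Type*} [Lattice X] [AddCommGroup X] [Module ℝ X]
  [CovariantClass X X (· + ·) (· ≤ ·)]

private lemma rh_nonneg (f : X →ₗ[ℝ] ℝ) (hf : ∀ x y : X, f (x ⊔ y) = f x ⊔ f y)
    {x : X} (hx : 0 ≤ x) : 0 ≤ f x := by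
  have h := hf x 0
  rw [sup_eq_left.2 hx, map_zero] at h
  exact h ▸ le_sup_right

private lemma rh_mono (f : X →ₗ[ℝ] ℝ) (hf : ∀ x y : X, f (x ⊔ y) = f x ⊔ f y)
    {x y : X} (hxy : x ≤ y) : f x ≤ f y := by
  have h := hf x y
  rw [sup_eq_right.2 hxy] at h
  exact h ▸ le_sup_left

private lemma rh_inf (f : X →ₗ[ℝ] ℝ) (hf : ∀ x y : X, f (x ⊔ y) = f x ⊔ f y)
    (x y : X) : f (x ⊓ y) = f x ⊓ f y := by
  have h : x ⊓ y = -(-x ⊔ -y) := by rw [neg_sup, neg_neg, neg_neg]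
  rw [h, map_neg, hf, map_neg, map_neg, neg_sup, neg_neg, neg_neg]

private lemma rh_abs (f : X →ₗ[ℝ] ℝ) (hf : ∀ x y : X, f (x ⊔ y) = f x ⊔ f y)
    (x : X) : f |x| = |f x| := by
  show f (x ⊔ -x) = f x ⊔ -(f x)
  rw [hf, map_neg]

/-- bounds for f y when |y| ≤ x -/
private lemma rh_abs_le (f : X →ₗ[ℝ] ℝ) (hf : ∀ x y : X, f (x ⊔ y) = f x ⊔ f y)
    {x y : X} (h : |y| ≤ x) : |f y| ≤ f x := by
  rw [← rh_abs f hf]; exact rh_mono f hf h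

/-- In the disjoint case (witness z with f z = 0 < g z), the key element:
    w = x ⊓ t•z with f w = 0, g w = g x, 0 ≤ w ≤ x. -/
private lemma disj_w (f g : X →ₗ[ℝ] ℝ) (hf : ∀ x y : X, f (x ⊔ y) = f x ⊔ f y)
    (hg : ∀ x y : X, g (x ⊔ y) = g x ⊔ g y)
    (z : X) (hz0 : 0 ≤ z) (hfz : f z = 0) (hgz : 0 < g z)
    (x : X) (hx : 0 ≤ x) :
    ∃ w : X, 0 ≤ w ∧ w ≤ x ∧ f w = 0 ∧ g w = g x := by
  obtain ⟨n, hn⟩ := exists_nat_ge (g x / g z)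
  have hngz : g x ≤ n * g z := by
    rw [← div_le_iff₀ hgz] at *; exact hn
  have hnz0 : (0:X) ≤ n • z := nsmul_nonneg hz0 n
  refine ⟨x ⊓ n • z, le_inf hx hnz0, inf_le_left, ?_, ?_⟩
  · rw [rh_inf f hf, map_nsmul, nsmul_eq_mul, hfz, mul_zero]
    exact inf_eq_right.2 (rh_nonneg f hf hx)
  · rw [rh_inf g hg, map_nsmul, nsmul_eq_mul]
    exact inf_eq_left.2 hngz

private lemma disj_glb (f g : X →ₗ[ℝ] ℝ) (hf : ∀ x y : X, f (x ⊔ y) = f x ⊔ f y)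
    (hg : ∀ x y : X, g (x ⊔ y) = g x ⊔ g y)
    (z : X) (hz0 : 0 ≤ z) (hfz : f z = 0) (hgz : 0 < g z)
    (x : X) (hx : 0 ≤ x) :
    IsGLB {r : ℝ | ∃ y : X, 0 ≤ y ∧ y ≤ x ∧ f y + g (x - y) = r} (0 : ℝ) := by
  constructor
  · rintro r ⟨y, hy0, hyx, rfl⟩
    have h1 : 0 ≤ f y := rh_nonneg f hf hy0
    have h2 : 0 ≤ g (x - y) := rh_nonneg g hg (sub_nonneg.2 hyx)
    linarith
  · intro b hb
    obtain ⟨w, hw0, hwx, hfw, hgw⟩ := disj_w f g hf hg z hz0 hfz hgz x hx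
    exact hb ⟨w, hw0, hwx, by rw [map_sub, hfw, hgw]; ring⟩

private lemma disj_lub (f g : X →ₗ[ℝ] ℝ) (hf : ∀ x y : X, f (x ⊔ y) = f x ⊔ f y)
    (hg : ∀ x y : X, g (x ⊔ y) = g x ⊔ g y)
    (z : X) (hz0 : 0 ≤ z) (hfz : f z = 0) (hgz : 0 < g z)
    (x : X) (hx : 0 ≤ x) :
    IsLUB {r : ℝ | ∃ y : X, |y| ≤ x ∧ f y - g y = r} (f x + g x) := by
  constructor
  · rintro r ⟨y, hy, rfl⟩
    have h1 : |f y| ≤ f x := rh_abs_le f hf hy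
    have h2 : |g y| ≤ g x := rh_abs_le g hg hy
    have := abs_le.1 h1
    have := abs_le.1 h2
    linarith [this.1, this.2, (abs_le.1 h1).1, (abs_le.1 h1).2]
  · intro b hb
    obtain ⟨w, hw0, hwx, hfw, hgw⟩ := disj_w f g hf hg z hz0 hfz hgz x hx
    refine hb ⟨x - w - w, ?_, ?_⟩
    · have h1 : x - w - w ≤ x := by
        have : (0:X) ≤ w + w := add_nonneg hw0 hw0
        have := sub_le_self x this
        calc x - w - w = x - (w + w) := by abel
        _ ≤ x := sub_le_self x (add_nonneg hw0 hw0)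
      have h2 : -(x - w - w) ≤ x := by
        have hww : w + w ≤ x + x := add_le_add hwx hwx
        have : -(x - w - w) = w + w - x := by abel
        rw [this]
        exact sub_le_iff_le_add.2 hww
      exact abs_le'.2 ⟨h1, h2⟩
    · rw [map_sub, map_sub, map_sub, map_sub, hfw, hgw]; ring

/-- conversions between the (f,g) and (g,f) sets -/
private lemma swap_glb (f g : X →ₗ[ℝ] ℝ) (x : X) (a : ℝ)
    (h : IsGLB {r : ℝ | ∃ y : X, 0 ≤ y ∧ y ≤ x ∧ g y + f (x - y) = r} a) :
    IsGLB {r : ℝ | ∃ y : X, 0 ≤ y ∧ y ≤ x ∧ f y + g (x - y) = r} a := by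
  convert h using 2
  ext r
  constructor <;> rintro ⟨y, h0, h1, rfl⟩ <;>
    exact ⟨x - y, sub_nonneg.2 h1, sub_le_self x h0, by rw [sub_sub_cancel]; ring⟩

private lemma swap_lub (f g : X →ₗ[ℝ] ℝ) (x : X) (a : ℝ)
    (h : IsLUB {r : ℝ | ∃ y : X, |y| ≤ x ∧ g y - f y = r} a) :
    IsLUB {r : ℝ | ∃ y : X, |y| ≤ x ∧ f y - g y = r} a := by
  convert h using 2
  ext r
  constructor <;> rintro ⟨y, h0, rfl⟩ <;>
    exact ⟨-y, by rwa [abs_neg], by rw [map_neg, map_neg]; ring⟩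

/-- the proportional case: g = c • f with 0 ≤ c ≤ 1, so f ⊓ g = g. -/
private lemma prop_case (f g : X →ₗ[ℝ] ℝ) (hf : ∀ x y : X, f (x ⊔ y) = f x ⊔ f y)
    (hg : ∀ x y : X, g (x ⊔ y) = g x ⊔ g y)
    (c : ℝ) (hc0 : 0 ≤ c) (hc1 : c ≤ 1) (hcg : ∀ x : X, g x = c * f x) :
    (∀ x : X, 0 ≤ x → IsGLB {r : ℝ | ∃ y : X, 0 ≤ y ∧ y ≤ x ∧ f y + g (x - y) = r} (g x)) ∧
    (∀ x : X, 0 ≤ x → IsLUB {r : ℝ | ∃ y : X, |y| ≤ x ∧ f y - g y = r} (f x + g x - 2 * g x)) ∧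
    (∀ x y : X, (f - g) (x ⊔ y) = (f - g) x ⊔ (f - g) y) := by
  refine ⟨?_, ?_, ?_⟩
  · intro x hx
    constructor
    · rintro r ⟨y, hy0, hyx, rfl⟩
      have h1 : 0 ≤ f y := rh_nonneg f hf hy0
      have h2 : g (x - y) = c * (f x - f y) := by rw [hcg, map_sub]
      have h3 : 0 ≤ (1 - c) * f y := mul_nonneg (by linarith) h1
      rw [hcg x, h2]; nlinarith
    · intro b hb
      exact hb ⟨0, le_rfl, hx, by simp⟩
  · intro x hx
    constructor
    · rintro r ⟨y, hy, rfl⟩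
      have h1 : f y ≤ f x := (le_abs_self _).trans (rh_abs_le f hf hy)
      have h3 : (1 - c) * f y ≤ (1 - c) * f x :=
        mul_le_mul_of_nonneg_left h1 (by linarith)
      rw [hcg x, hcg y]; nlinarith
    · intro b hb
      refine hb ⟨x, ?_, by rw [hcg x]; ring⟩
      rw [abs_of_nonneg hx]
  · intro x y
    simp only [LinearMap.sub_apply]
    rw [hf, hcg, hcg, hcg, hf]
    rcases le_total (f x) (f y) with h | h
    · rw [sup_eq_right.2 h, sup_eq_right.2 (by nlinarith : f x - c * f x ≤ f y - c * f y)]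
    · rw [sup_eq_left.2 h, sup_eq_left.2 (by nlinarith : f y - c * f y ≤ f x - c * f x)]

end Aux


/-- For Riesz homomorphisms `f g : X → ℝ`, the modulus `|f - g|` in the order
dual equals `f + g - 2 (f ⊓ g)`, the infimum `f ⊓ g` is a Riesz homomorphism,
and the positive part `f - (f ⊓ g)` and negative part `g - (f ⊓ g)` of `f - g`
are Riesz homomorphisms.  The infimum `f ⊓ g` and the modulus are described by
the Riesz–Kantorovich formulas. -/
theorem stmt10 {X : Type*} [Lattice X] [AddCommGroup X] [Module ℝ X]
    [CovariantClass X X (· + ·) (· ≤ ·)]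
    (f g : X →ₗ[ℝ] ℝ)
    (hf : ∀ x y : X, f (x ⊔ y) = f x ⊔ f y)
    (hg : ∀ x y : X, g (x ⊔ y) = g x ⊔ g y) :
    ∃ m : X →ₗ[ℝ] ℝ,
      -- `m` is the infimum `f ⊓ g` in the order dual (Riesz–Kantorovich formula)
      (∀ x : X, 0 ≤ x → IsGLB {r : ℝ | ∃ y : X, 0 ≤ y ∧ y ≤ x ∧ f y + g (x - y) = r} (m x)) ∧
      -- `f ⊓ g` is a Riesz homomorphism
      (∀ x y : X, m (x ⊔ y) = m x ⊔ m y) ∧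
      -- `|f - g| = f + g - 2 (f ⊓ g)` via the Riesz–Kantorovich formula for the modulus
      (∀ x : X, 0 ≤ x →
        IsLUB {r : ℝ | ∃ y : X, |y| ≤ x ∧ f y - g y = r} (f x + g x - 2 * m x)) ∧
      -- the positive and negative parts of `f - g` are Riesz homomorphisms
      (∀ x y : X, (f - m) (x ⊔ y) = (f - m) x ⊔ (f - m) y) ∧
      (∀ x y : X, (g - m) (x ⊔ y) = (g - m) x ⊔ (g - m) y) := by
  by_cases h1 : ∃ z : X, 0 ≤ z ∧ f z = 0 ∧ 0 < g z
  · obtain ⟨z, hz0, hfz, hgz⟩ := h1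
    refine ⟨0, ?_, by simp, ?_, ?_, ?_⟩
    · intro x hx; simpa using disj_glb f g hf hg z hz0 hfz hgz x hx
    · intro x hx; simpa using disj_lub f g hf hg z hz0 hfz hgz x hx
    · intro x y; simpa using hf x y
    · intro x y; simpa using hg x y
  by_cases h2 : ∃ z : X, 0 ≤ z ∧ g z = 0 ∧ 0 < f z
  · obtain ⟨z, hz0, hgz, hfz⟩ := h2
    refine ⟨0, ?_, by simp, ?_, ?_, ?_⟩
    · intro x hx
      simpa using swap_glb f g x 0 (disj_glb g f hg hf z hz0 hgz hfz x hx)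
    · intro x hx
      have h0 : f x + g x - 2 * (0 : X →ₗ[ℝ] ℝ) x = g x + f x := by simp; ring
      rw [h0]
      exact swap_lub f g x _ (disj_lub g f hg hf z hz0 hgz hfz x hx)
    · intro x y; simpa using hf x y
    · intro x y; simpa using hg x y
  push_neg at h1 h2
  have K1 : ∀ w : X, f w = 0 → g w = 0 := by
    intro w hw
    have ha : f |w| = 0 := by rw [rh_abs f hf, hw, abs_zero]
    have hb : g |w| ≤ 0 := h1 |w| (abs_nonneg w) ha
    have hcc : 0 ≤ g |w| := rh_nonneg g hg (abs_nonneg w)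
    have hd : |g w| = 0 := by rw [← rh_abs g hg]; exact le_antisymm hb hcc
    exact abs_eq_zero.1 hd
  have K2 : ∀ w : X, g w = 0 → f w = 0 := by
    intro w hw
    have ha : g |w| = 0 := by rw [rh_abs g hg, hw, abs_zero]
    have hb : f |w| ≤ 0 := h2 |w| (abs_nonneg w) ha
    have hcc : 0 ≤ f |w| := rh_nonneg f hf (abs_nonneg w)
    have hd : |f w| = 0 := by rw [← rh_abs f hf]; exact le_antisymm hb hcc
    exact abs_eq_zero.1 hd
  by_cases hf0 : ∀ v : X, f v = 0
  · have hcg : ∀ x : X, g x = 1 * f x := by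
      intro x; rw [K1 x (hf0 x), hf0 x]; ring
    obtain ⟨A, B, C⟩ := prop_case f g hf hg 1 zero_le_one le_rfl hcg
    exact ⟨g, A, hg, B, C, by intro x y; simp⟩
  · push_neg at hf0
    obtain ⟨v, hv⟩ := hf0
    set u := |v| with hu
    have hu0 : 0 < f u := by
      rw [hu, rh_abs f hf]; exact abs_pos.2 hv
    have hgu : 0 < g u := by
      rcases (rh_nonneg g hg (abs_nonneg v)).lt_or_eq with h | h
      · exact h
      · exact absurd (K2 u h.symm) hu0.ne'
    have hc : ∀ x : X, g x = (g u / f u) * f x := by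
      intro x
      have hzf : f ((f u) • x - (f x) • u) = 0 := by
        rw [map_sub, map_smul, map_smul, smul_eq_mul, smul_eq_mul]; ring
      have hzg := K1 _ hzf
      rw [map_sub, map_smul, map_smul, smul_eq_mul, smul_eq_mul] at hzg
      rw [div_mul_eq_mul_div, eq_div_iff hu0.ne']
      linarith
    rcases le_total (g u / f u) 1 with hc1 | hc1
    · obtain ⟨A, B, C⟩ :=
        prop_case f g hf hg _ (div_nonneg hgu.le hu0.le) hc1 hc
      exact ⟨g, A, hg, B, C, by intro x y; simp⟩
    · have hc' : ∀ x : X, f x = (f u / g u) * g x := by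
        intro x
        rw [hc x]
        field_simp
      have hc1' : f u / g u ≤ 1 := by
        rw [div_le_one hgu]
        exact (one_le_div hu0).1 hc1
      obtain ⟨A, B, C⟩ :=
        prop_case g f hg hf _ (div_nonneg hu0.le hgu.le) hc1' hc'
      refine ⟨f, ?_, hf, ?_, by intro x y; simp, C⟩
      · intro x hx; exact swap_glb f g x (f x) (A x hx)
      · intro x hx
        have h0 : f x + g x - 2 * f x = g x + f x - 2 * f x := by ring
        rw [h0]
        exact swap_lub f g x _ (B x hx)
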